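/- Let (X, ‖·‖) be a Banach space and let T : X → X be a (k, h)-enriched Bianchini mapping with k ∈ [0, ∞) and h ∈ [0, 1). Set λ = 1/(k+1) ∈ (0, 1]. Then for every x₀ ∈ X, the Krasnoselskij iteration defined by xₙ₊₁ = (1−λ)xₙ + λT xₙ converges (strongly) to the unique fixed point p of T. -/

import Mathlib

/-- For a `(k, h)`-enriched Bianchini mapping `T` on a Banach space, with
`λ = 1/(k+1)`, the Krasnoselskij iteration `xₙ₊₁ = (1−λ)xₙ + λ T xₙ` converges
strongly to the unique fixed point of `T`, for every starting point `x₀`. -/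
theorem enrichedBianchini_krasnoselskij_tendsto
    {X : Type*} [NormedAddCommGroup X] [NormedSpace ℝ X] [CompleteSpace X]
    (T : X → X) (k h : ℝ) (hk : 0 ≤ k) (hh0 : 0 ≤ h) (hh : h < 1)
    (hT : ∀ x y : X, ‖k • (x - y) + (T x - T y)‖ ≤ h * max ‖x - T x‖ ‖y - T y‖) :
    ∃ p : X, T p = p ∧ (∀ q : X, T q = q → q = p) ∧
      ∀ x : ℕ → X,
        (∀ n : ℕ, x (n + 1) = (1 - 1 / (k + 1)) • x n + (1 / (k + 1)) • T (x n)) →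
        Filter.Tendsto x Filter.atTop (nhds p) := by
  have hk1 : (0:ℝ) < k + 1 := by linarith
  set l : ℝ := 1 / (k + 1) with hl
  have hl0 : 0 < l := by positivity
  set S : X → X := fun x => (1 - l) • x + l • T x with hS
  -- x - S x = l • (x - T x)
  have hfix : ∀ x : X, x - S x = l • (x - T x) := by
    intro x
    simp only [hS]
    match_scalars <;> ring
  -- S x - S y = l • (k • (x - y) + (T x - T y))
  have hdiff : ∀ x y : X, S x - S y = l • (k • (x - y) + (T x - T y)) := by
    intro x y
    simp only [hS, hl]
    match_scalars <;> field_simp <;> ring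
  have hnl : ∀ v : X, ‖l • v‖ = l * ‖v‖ := fun v => by
    rw [norm_smul, Real.norm_eq_abs, abs_of_pos hl0]
  -- Bianchini condition for S
  have hA : ∀ x y : X, ‖S x - S y‖ ≤ h * max ‖x - S x‖ ‖y - S y‖ := by
    intro x y
    rw [hdiff, hnl, hfix, hfix, hnl, hnl, ← mul_max_of_nonneg _ _ hl0.le]
    calc l * ‖k • (x - y) + (T x - T y)‖ ≤ l * (h * max ‖x - T x‖ ‖y - T y‖) :=
          mul_le_mul_of_nonneg_left (hT x y) hl0.le
      _ = h * (l * max ‖x - T x‖ ‖y - T y‖) := by ring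
  -- contraction on successive iterates
  have hB : ∀ x : X, ‖S x - S (S x)‖ ≤ h * ‖x - S x‖ := by
    intro x
    have := hA x (S x)
    rcases max_cases ‖x - S x‖ ‖S x - S (S x)‖ with ⟨he, _⟩ | ⟨he, _⟩
    · rwa [he] at this
    · rw [he] at this
      have h0 : ‖S x - S (S x)‖ = 0 := by nlinarith [norm_nonneg (S x - S (S x))]
      rw [h0]; positivity
  -- main claim: any iteration sequence converges to a fixed point of T
  have key : ∀ x : ℕ → X, (∀ n, x (n + 1) = S (x n)) →
      ∃ p : X, T p = p ∧ Filter.Tendsto x Filter.atTop (nhds p) := by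
    intro x hx
    have hd : ∀ n : ℕ, ‖x n - x (n + 1)‖ ≤ ‖x 0 - x 1‖ * h ^ n := by
      intro n
      induction n with
      | zero => simp
      | succ n ih =>
        have : ‖x (n+1) - x (n+2)‖ ≤ h * ‖x n - x (n+1)‖ := by
          rw [hx n, hx (n+1), hx n]; exact hB (x n)
        calc ‖x (n+1) - x (n+2)‖ ≤ h * ‖x n - x (n+1)‖ := this
          _ ≤ h * (‖x 0 - x 1‖ * h ^ n) := mul_le_mul_of_nonneg_left ih hh0
          _ = ‖x 0 - x 1‖ * h ^ (n + 1) := by ring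
    have hcauchy : CauchySeq x :=
      cauchySeq_of_le_geometric h ‖x 0 - x 1‖ hh fun n => by
        rw [dist_eq_norm]; exact hd n
    obtain ⟨p, hp⟩ := cauchySeq_tendsto_of_complete hcauchy
    have hd0 : Filter.Tendsto (fun n => ‖x n - x (n + 1)‖) Filter.atTop (nhds 0) := by
      have := tendsto_pow_atTop_nhds_zero_of_lt_one hh0 hh
      have h2 := this.const_mul ‖x 0 - x 1‖
      rw [mul_zero] at h2
      exact squeeze_zero (fun n => norm_nonneg _) hd h2
    -- S p = p
    have hSp : S p = p := by
      have hle : ∀ n, ‖x (n + 1) - S p‖ ≤ h * (‖x n - x (n + 1)‖ + ‖p - S p‖) := by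
        intro n
        have h1 := hA (x n) p
        rw [← hx n] at h1
        calc ‖x (n + 1) - S p‖ ≤ h * max ‖x n - x (n + 1)‖ ‖p - S p‖ := h1
          _ ≤ h * (‖x n - x (n + 1)‖ + ‖p - S p‖) :=
              mul_le_mul_of_nonneg_left
                (max_le (le_add_of_nonneg_right (norm_nonneg _))
                  (le_add_of_nonneg_left (norm_nonneg _))) hh0
      have hlim1 : Filter.Tendsto (fun n => ‖x (n + 1) - S p‖) Filter.atTop
          (nhds ‖p - S p‖) :=
        ((hp.comp (Filter.tendsto_add_atTop_nat 1)).sub tendsto_const_nhds).norm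
      have hlim2 : Filter.Tendsto (fun n => h * (‖x n - x (n + 1)‖ + ‖p - S p‖))
          Filter.atTop (nhds (h * (0 + ‖p - S p‖))) :=
        ((hd0.add tendsto_const_nhds).const_mul h)
      have hineq : ‖p - S p‖ ≤ h * (0 + ‖p - S p‖) :=
        le_of_tendsto_of_tendsto' hlim1 hlim2 hle
      have : ‖p - S p‖ = 0 := by nlinarith [norm_nonneg (p - S p)]
      have := sub_eq_zero.mp (norm_eq_zero.mp this)
      exact this.symm
    -- T p = p
    have hTp : T p = p := by
      have : l • (T p - p) = 0 := by
        have := hSp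
        simp only [hS] at this
        calc l • (T p - p) = ((1 - l) • p + l • T p) - p := by
              match_scalars <;> ring
          _ = 0 := by rw [this]; simp
      have := smul_eq_zero.mp this
      rcases this with h' | h'
      · exact absurd h' (ne_of_gt hl0)
      · exact sub_eq_zero.mp h'
    exact ⟨p, hTp, hp⟩
  -- fixed points of T are fixed points of S
  have hTS : ∀ q : X, T q = q → S q = q := by
    intro q hq
    simp only [hS, hq]
    match_scalars <;> ring
  -- canonical sequence
  obtain ⟨p, hTp, hplim⟩ := key (fun n => S^[n] 0) (fun n => Function.iterate_succ_apply' S n 0)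
  have huniq : ∀ q : X, T q = q → q = p := by
    intro q hq
    have h1 := hA q p
    rw [hTS q hq, hTS p hTp] at h1
    simp only [sub_self, norm_zero, max_self, mul_zero] at h1
    have : ‖q - p‖ = 0 := le_antisymm h1 (norm_nonneg _)
    exact sub_eq_zero.mp (norm_eq_zero.mp this)
  refine ⟨p, hTp, huniq, ?_⟩
  intro x hx
  obtain ⟨q, hTq, hqlim⟩ := key x (fun n => by rw [hx n])
  rwa [huniq q hTq] at hqlim
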